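/- Let g be real symmetric positive definite and R real antisymmetric, n×n. Define D(t) = iR coth(t g⁻¹ iR) (interpreted via the even power series of z coth z, so D(t) = (1/t) g Ψ(t g⁻¹ iR) with Ψ(z) = z coth z). Then det(D(t) + iR) = det( iR / sinh(t g⁻¹ iR) ) = det( g⁻¹ sinh(t g⁻¹ iR)/(g⁻¹ iR) )⁻¹, where sinh(z)/z is interpreted as its even power series. -/

import Mathlib

open Matrix

/-- The even power series `Ψ(M) = M coth M = Σ_k (2^{2k} B_{2k}/(2k)!) M^{2k}`
(`B_{2k}` the Bernoulli numbers), applied to a matrix `M`. -/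
noncomputable def cothSeries (n : ℕ) (M : Matrix (Fin n) (Fin n) ℂ) :
    Matrix (Fin n) (Fin n) ℂ :=
  ∑' k : ℕ, ((2 ^ (2 * k) * (bernoulli (2 * k) : ℂ)) / (Nat.factorial (2 * k) : ℂ))
    • M ^ (2 * k)

/-- The even power series `sinh(M)/M = Σ_k M^{2k}/(2k+1)!` applied to a matrix `M`. -/
noncomputable def sinhDivSeries (n : ℕ) (M : Matrix (Fin n) (Fin n) ℂ) :
    Matrix (Fin n) (Fin n) ℂ :=
  ∑' k : ℕ, ((Nat.factorial (2 * k + 1) : ℂ))⁻¹ • M ^ (2 * k)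

section ScalarPart
open PowerSeries Finset

private lemma sum_even_vanish {F : ℕ → ℚ} (h : ∀ i, Odd i → F i = 0) (N : ℕ) :
    ∑ i ∈ range (2*N+1), F i = ∑ k ∈ range (N+1), F (2*k) := by
  induction N with
  | zero => simp
  | succ N ih =>
      have h1 : 2*(N+1)+1 = (2*N+1) + 1 + 1 := by ring
      rw [h1, sum_range_succ, sum_range_succ, ih, h (2*N+1) ⟨N, by omega⟩, add_zero]
      conv_rhs => rw [sum_range_succ]
      congr 2

private lemma cothMul_aux :
    (rescale (2:ℚ) (bernoulliPowerSeries ℚ) + X) * (PowerSeries.exp ℚ - evalNegHom (PowerSeries.exp ℚ))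
      = X * (PowerSeries.exp ℚ + evalNegHom (PowerSeries.exp ℚ)) := by
  set E := PowerSeries.exp ℚ
  set E' := evalNegHom (PowerSeries.exp ℚ) with hE'
  have hEE' : E * E' = 1 := PowerSeries.exp_mul_exp_neg_eq_one
  have h2E : rescale (2:ℚ) E = E * E := by
    rw [show (2:ℚ) = 1+1 by norm_num, ← PowerSeries.exp_mul_exp_eq_exp_add, rescale_one]
    rfl
  have hAX : bernoulliPowerSeries ℚ * (E - 1) = X := bernoulliPowerSeries_mul_exp_sub_one ℚ
  have hC2 : C (2:ℚ) = (2:ℚ⟦X⟧) := map_ofNat (C (R := ℚ)) 2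
  have hA2 : rescale (2:ℚ) (bernoulliPowerSeries ℚ) * (E*E - 1) = (2:ℚ⟦X⟧) * X := by
    have := congrArg (rescale (2:ℚ)) hAX
    rw [_root_.map_mul, map_sub, _root_.map_one, rescale_X, h2E, hC2] at this
    exact this
  have hkey : rescale (2:ℚ) (bernoulliPowerSeries ℚ) * (E - E') = (2:ℚ⟦X⟧) * X * E' := by
    have h := congrArg (· * E') hA2
    calc rescale (2:ℚ) (bernoulliPowerSeries ℚ) * (E - E')
        = rescale (2:ℚ) (bernoulliPowerSeries ℚ) * (E*E - 1) * E' := by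
          rw [mul_assoc]; congr 1
          rw [sub_mul, mul_assoc, hEE', mul_one, one_mul]
      _ = (2:ℚ⟦X⟧) * X * E' := h
  linear_combination hkey

private noncomputable def Sq : ℚ⟦X⟧ :=
  PowerSeries.mk fun m => if Even m then ((Nat.factorial (m+1) : ℚ))⁻¹ else 0

private noncomputable def Hq : ℚ⟦X⟧ :=
  PowerSeries.mk fun m => if Even m then ((Nat.factorial m : ℚ))⁻¹ else 0

private lemma coeff_evalNegHom_exp (m : ℕ) :
    coeff m (evalNegHom (PowerSeries.exp ℚ)) = (-1)^m * ((Nat.factorial m : ℚ))⁻¹ := by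
  show coeff m (rescale (-1:ℚ) (PowerSeries.exp ℚ)) = _
  rw [coeff_rescale, PowerSeries.coeff_exp]
  simp [one_div]

private lemma hC2 : C (2:ℚ) = (2:ℚ⟦X⟧) := map_ofNat (C (R := ℚ)) 2

private lemma hSq : (2:ℚ⟦X⟧) * (X * Sq) = PowerSeries.exp ℚ - evalNegHom (PowerSeries.exp ℚ) := by
  ext m
  rw [← hC2, coeff_C_mul, _root_.map_sub, PowerSeries.coeff_exp, coeff_evalNegHom_exp]
  cases m with
  | zero => simp
  | succ n =>
      rw [coeff_succ_X_mul, Sq, coeff_mk]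
      rcases Nat.even_or_odd n with he | ho
      · rw [if_pos he, (he.add_one).neg_one_pow]
        field_simp
        norm_num
        rw [mul_inv_cancel₀ (Nat.cast_ne_zero.mpr (Nat.factorial_ne_zero _))]; norm_num
      · rw [if_neg (by simpa using ho), (ho.add_one).neg_one_pow]
        ring_nf
        simp

private lemma hHq : (2:ℚ⟦X⟧) * Hq = PowerSeries.exp ℚ + evalNegHom (PowerSeries.exp ℚ) := by
  ext m
  rw [← hC2, coeff_C_mul, _root_.map_add, PowerSeries.coeff_exp, coeff_evalNegHom_exp, Hq, coeff_mk]
  rcases Nat.even_or_odd m with he | ho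
  · rw [if_pos he, he.neg_one_pow]
    field_simp
    norm_num
    rw [mul_inv_cancel₀ (Nat.cast_ne_zero.mpr (Nat.factorial_ne_zero _))]; norm_num
  · rw [if_neg (by simpa using ho), ho.neg_one_pow]
    ring_nf
    simp

private lemma hCSq : (rescale (2:ℚ) (bernoulliPowerSeries ℚ) + X) * Sq = Hq := by
  have h2ne : (2:ℚ⟦X⟧) ≠ 0 := fun h => by
    rw [← hC2] at h
    have := congrArg ((constantCoeff (R := ℚ))) h
    simp [constantCoeff_C] at this
  have h1 : X * ((2:ℚ⟦X⟧) * ((rescale (2:ℚ) (bernoulliPowerSeries ℚ) + X) * Sq))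
      = X * ((2:ℚ⟦X⟧) * Hq) := by
    rw [hHq]
    calc X * ((2:ℚ⟦X⟧) * ((rescale (2:ℚ) (bernoulliPowerSeries ℚ) + X) * Sq))
        = (rescale (2:ℚ) (bernoulliPowerSeries ℚ) + X) * ((2:ℚ⟦X⟧) * (X * Sq)) := by ring
      _ = (rescale (2:ℚ) (bernoulliPowerSeries ℚ) + X) *
            (PowerSeries.exp ℚ - evalNegHom (PowerSeries.exp ℚ)) := by rw [hSq]
      _ = X * (PowerSeries.exp ℚ + evalNegHom (PowerSeries.exp ℚ)) := cothMul_aux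
  exact mul_left_cancel₀ h2ne (mul_left_cancel₀ PowerSeries.X_ne_zero h1)

private lemma coeff_cothq (i : ℕ) :
    coeff i (rescale (2:ℚ) (bernoulliPowerSeries ℚ) + X)
      = 2^i * (bernoulli i / (Nat.factorial i : ℚ)) + (if i = 1 then 1 else 0) := by
  rw [_root_.map_add, coeff_rescale, coeff_X, bernoulliPowerSeries]
  rw [coeff_mk]
  simp [algebraMap]

private lemma coeff_cothq_odd {i : ℕ} (h : Odd i) :
    coeff i (rescale (2:ℚ) (bernoulliPowerSeries ℚ) + X) = 0 := by
  rw [coeff_cothq]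
  rcases eq_or_ne i 1 with rfl | hi
  · norm_num [bernoulli_one]
  · obtain ⟨m, rfl⟩ := h
    rw [if_neg hi, bernoulli_eq_bernoulli'_of_ne_one hi,
      bernoulli'_eq_zero_of_odd ⟨m, rfl⟩ (by omega)]
    simp

private lemma key_sum (N : ℕ) :
    ∑ k ∈ range (N+1),
      (2^(2*k) * bernoulli (2*k) / (Nat.factorial (2*k) : ℚ)) *
        ((Nat.factorial (2*(N-k)+1) : ℚ))⁻¹
      = ((Nat.factorial (2*N) : ℚ))⁻¹ := by
  have hc := congrArg (coeff (2*N)) hCSq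
  rw [coeff_mul, Finset.Nat.sum_antidiagonal_eq_sum_range_succ_mk] at hc
  rw [Hq, coeff_mk, if_pos ⟨N, by ring⟩] at hc
  rw [show (2*N).succ = 2*N+1 from rfl,
    sum_even_vanish (F := fun i => coeff i (rescale (2:ℚ) (bernoulliPowerSeries ℚ) + X)
      * coeff (2*N - i) Sq) (fun i hi => by rw [coeff_cothq_odd hi, zero_mul]) N] at hc
  rw [← hc]
  apply Finset.sum_congr rfl
  intro k hk
  have hkN : k ≤ N := by simpa [Nat.lt_succ_iff] using hk
  have h2 : 2*N - 2*k = 2*(N-k) := by omega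
  rw [coeff_cothq, if_neg (by omega), add_zero, h2, Sq, coeff_mk, if_pos ⟨N-k, by ring⟩]
  ring

end ScalarPart

private lemma keyC (N : ℕ) :
    ∑ p ∈ Finset.HasAntidiagonal.antidiagonal N,
      ((2 ^ (2 * p.1) * (bernoulli (2 * p.1) : ℂ)) / (Nat.factorial (2 * p.1) : ℂ)) *
        ((Nat.factorial (2 * p.2 + 1) : ℂ))⁻¹
      = ((Nat.factorial (2 * N) : ℂ))⁻¹ := by
  rw [Finset.Nat.sum_antidiagonal_eq_sum_range_succ_mk]
  have h := congrArg (fun q : ℚ => (q : ℂ)) (key_sum N)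
  push_cast at h
  simpa using h


/-- For `g` real symmetric positive definite, `R` real antisymmetric
and `D(t) = iR coth(t g⁻¹ iR) = (1/t) g Ψ(t g⁻¹ iR)`, one has
`det(D(t) + iR) = det(g⁻¹ sinh(t g⁻¹ iR)/(g⁻¹ iR))⁻¹`
(all matrix functions interpreted via their even power series, `t > 0` such that the
series converge and the relevant matrices are invertible). -/
theorem det_D_add_iR
    (n : ℕ) (g R : Matrix (Fin n) (Fin n) ℝ) (hg : g.PosDef) (hR : Rᵀ = -R)
    (t : ℝ) (ht : 0 < t)
    (M D : Matrix (Fin n) (Fin n) ℂ)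
    (hM : M = (t : ℂ) • ((g.map Complex.ofReal)⁻¹
        * (Complex.I • R.map Complex.ofReal)))
    (hD : D = (t : ℂ)⁻¹ • (g.map Complex.ofReal * cothSeries n M))
    (hsum₁ : Summable (fun k : ℕ =>
      ((2 ^ (2 * k) * (bernoulli (2 * k) : ℂ)) / (Nat.factorial (2 * k) : ℂ))
        • M ^ (2 * k)))
    (hsum₂ : Summable (fun k : ℕ =>
      ((Nat.factorial (2 * k + 1) : ℂ))⁻¹ • M ^ (2 * k)))
    (hinv : IsUnit ((g.map Complex.ofReal)⁻¹ * ((t : ℂ) • sinhDivSeries n M)).det) :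
    (D + Complex.I • R.map Complex.ofReal).det
      = (((g.map Complex.ofReal)⁻¹ * ((t : ℂ) • sinhDivSeries n M)).det)⁻¹ := by
    classical
  obtain ⟨G, hG⟩ : ∃ G', G' = g.map Complex.ofReal := ⟨_, rfl⟩
  obtain ⟨J, hJ⟩ : ∃ J', J' = Complex.I • R.map Complex.ofReal := ⟨_, rfl⟩
  rw [← hG] at hM hD hinv ⊢
  rw [← hJ] at hM
  rw [← hJ]
  have htc : (t : ℂ) ≠ 0 := by
    simpa using ht.ne'
  -- determinant of G
  have hGdet : G.det = ((g.det : ℝ) : ℂ) := by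
    rw [hG]
    exact (RingHom.map_det Complex.ofRealHom g).symm
  have hGdet0 : G.det ≠ 0 := by
    rw [hGdet]
    simpa using hg.det_pos.ne'
  have hGu : IsUnit G := (Matrix.isUnit_iff_isUnit_det G).mpr (isUnit_iff_ne_zero.mpr hGdet0)
  have hGG : G * G⁻¹ = 1 := mul_nonsing_inv G (isUnit_iff_ne_zero.mpr hGdet0)
  -- symmetry facts
  have hgsym : gᵀ = g := by
    rw [← Matrix.conjTranspose_eq_transpose_of_trivial]
    exact hg.1
  have hGsym : Gᵀ = G := by
    rw [hG, ← Matrix.transpose_map, hgsym]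
  have hGinvT : (G⁻¹)ᵀ = G⁻¹ := by
    rw [Matrix.transpose_nonsing_inv, hGsym]
  have hRmapneg : Rᵀ.map Complex.ofReal = -(R.map Complex.ofReal) := by
    rw [hR]
    ext i j
    simp [Matrix.map_apply]
  have hJT : Jᵀ = -J := by
    rw [hJ, Matrix.transpose_smul, ← Matrix.transpose_map, hRmapneg]
    simp
  have hMT : Mᵀ = G * (-M) * G⁻¹ := by
    have h1 : G * M * G⁻¹ = (t : ℂ) • (J * G⁻¹) := by
      rw [hM, Matrix.mul_smul, Matrix.smul_mul, ← Matrix.mul_assoc, hGG, Matrix.one_mul]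
    have h2 : Mᵀ = (t : ℂ) • (Jᵀ * (G⁻¹)ᵀ) := by
      rw [hM, Matrix.transpose_smul, Matrix.transpose_mul]
    rw [h2, hJT, hGinvT, Matrix.neg_mul, smul_neg, Matrix.mul_neg, Matrix.neg_mul, h1]
  -- J in terms of M
  have hJM : J = (t : ℂ)⁻¹ • (G * M) := by
    rw [hM, Matrix.mul_smul, ← Matrix.mul_assoc, hGG, Matrix.one_mul, smul_smul,
      inv_mul_cancel₀ htc, one_smul]
  have hDJ : D + J = (t : ℂ)⁻¹ • (G * (cothSeries n M + M)) := by
    rw [hD, hJM, Matrix.mul_add, smul_add]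
  -- norm instances
  letI : SeminormedRing (Matrix (Fin n) (Fin n) ℂ) := Matrix.linftyOpSemiNormedRing
  letI : NormedRing (Matrix (Fin n) (Fin n) ℂ) := Matrix.linftyOpNormedRing
  letI : NormedAlgebra ℂ (Matrix (Fin n) (Fin n) ℂ) := Matrix.linftyOpNormedAlgebra
  haveI : CompleteSpace (Matrix (Fin n) (Fin n) ℂ) := FiniteDimensional.complete ℂ _
  have hs1 : Summable (fun k : ℕ =>
      ‖((2 ^ (2 * k) * (bernoulli (2 * k) : ℂ)) / (Nat.factorial (2 * k) : ℂ))
        • M ^ (2 * k)‖) := summable_norm_iff.mpr hsum₁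
  have hs2 : Summable (fun k : ℕ =>
      ‖((Nat.factorial (2 * k + 1) : ℂ))⁻¹ • M ^ (2 * k)‖) := summable_norm_iff.mpr hsum₂
  -- Cauchy product
  have hpt : ∀ N : ℕ,
      (∑ p ∈ Finset.HasAntidiagonal.antidiagonal N,
        (((2 ^ (2 * p.1) * (bernoulli (2 * p.1) : ℂ)) / (Nat.factorial (2 * p.1) : ℂ))
            • M ^ (2 * p.1)) *
          (((Nat.factorial (2 * p.2 + 1) : ℂ))⁻¹ • M ^ (2 * p.2)))
        = ((Nat.factorial (2 * N) : ℂ))⁻¹ • M ^ (2 * N) := by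
    intro N
    rw [← keyC N, Finset.sum_smul]
    refine Finset.sum_congr rfl fun p hp => ?_
    have hpN : 2 * p.1 + 2 * p.2 = 2 * N := by
      have := Finset.HasAntidiagonal.mem_antidiagonal.mp hp
      omega
    rw [smul_mul_smul_comm, ← pow_add, hpN]
  have hCS : cothSeries n M * sinhDivSeries n M
      = ∑' N : ℕ, ((Nat.factorial (2 * N) : ℂ))⁻¹ • M ^ (2 * N) := by
    unfold cothSeries sinhDivSeries
    exact (tsum_mul_tsum_eq_tsum_sum_antidiagonal_of_summable_norm hs1 hs2).trans
      (tsum_congr hpt)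
  have hcoshSum : Summable (fun N : ℕ => ((Nat.factorial (2 * N) : ℂ))⁻¹ • M ^ (2 * N)) :=
    (summable_sum_mul_antidiagonal_of_summable_norm' hs1 hsum₁ hs2 hsum₂).congr hpt
  have hsinhSum : Summable (fun k : ℕ => ((Nat.factorial (2 * k + 1) : ℂ))⁻¹ • M ^ (2 * k + 1)) :=
    (hsum₂.mul_left M).congr fun k => by
      rw [mul_smul_comm, ← pow_succ']
  have hMS : M * sinhDivSeries n M
      = ∑' k : ℕ, ((Nat.factorial (2 * k + 1) : ℂ))⁻¹ • M ^ (2 * k + 1) := by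
    unfold sinhDivSeries
    rw [← hsum₂.tsum_mul_left M]
    exact tsum_congr fun k => by rw [mul_smul_comm, ← pow_succ']
  have hexpM : (cothSeries n M + M) * sinhDivSeries n M = NormedSpace.exp M := by
    rw [Matrix.add_mul, hCS, hMS, NormedSpace.exp_eq_tsum ℂ]
    exact tsum_even_add_odd (f := fun m : ℕ => ((Nat.factorial m : ℂ))⁻¹ • M ^ m)
      hcoshSum hsinhSum
  -- determinant of the exponential is 1
  have hdetexp : (NormedSpace.exp M).det = 1 := by
    have hsplit : NormedSpace.exp M
        = NormedSpace.exp ((2:ℂ)⁻¹ • M) * NormedSpace.exp ((2:ℂ)⁻¹ • M) := by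
      rw [← Matrix.exp_add_of_commute _ _ (Commute.refl _), ← add_smul]
      norm_num
    have hTdet : (NormedSpace.exp ((2:ℂ)⁻¹ • M)).det
        = (NormedSpace.exp (-((2:ℂ)⁻¹ • M))).det := by
      conv_lhs => rw [← Matrix.det_transpose, ← Matrix.exp_transpose]
      have h1 : ((2:ℂ)⁻¹ • M)ᵀ = G * (-((2:ℂ)⁻¹ • M)) * G⁻¹ := by
        rw [Matrix.transpose_smul, hMT, ← smul_neg, Matrix.mul_smul, Matrix.smul_mul]
      rw [h1, Matrix.exp_conj G _ hGu, Matrix.det_conj hGu]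
    have hinvpair : (NormedSpace.exp ((2:ℂ)⁻¹ • M)).det
        * (NormedSpace.exp (-((2:ℂ)⁻¹ • M))).det = 1 := by
      rw [← Matrix.det_mul, ← Matrix.exp_add_of_commute _ _ ((Commute.refl ((2:ℂ)⁻¹ • M)).neg_right),
        add_neg_cancel, NormedSpace.exp_zero, Matrix.det_one]
    rw [← hTdet] at hinvpair
    rw [hsplit, Matrix.det_mul]
    exact hinvpair
  have hab : (cothSeries n M + M).det * (sinhDivSeries n M).det = 1 := by
    rw [← Matrix.det_mul, hexpM, hdetexp]
  have ha : (cothSeries n M + M).det ≠ 0 := left_ne_zero_of_mul_eq_one hab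
  have hb : (sinhDivSeries n M).det = ((cothSeries n M + M).det)⁻¹ :=
    (inv_eq_of_mul_eq_one_right hab).symm
  rw [hDJ, Matrix.det_smul, Matrix.det_mul, Matrix.det_mul, Matrix.det_smul,
    Matrix.det_nonsing_inv, hb]
  rw [Ring.inverse_eq_inv]
  field_simp
  rw [← mul_pow, one_div, inv_mul_cancel₀ htc, one_pow]
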